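/- For every n ≥ 1 and every 0 ≤ k ≤ n−1, the Euler characteristic χ(Θ(Cube(n,k))) is even. -/

import Mathlib

/-- A hypergraph on vertex type `V` is given by its set `H` of hyperedges
(subsets of `V`).  The theta complex `Θ(𝓗)` has as simplices the nonempty
finite subsets of `V` that are disjoint from at least one hyperedge. -/
def thetaComplex {V : Type*} (H : Set (Set V)) : Set (Finset V) :=
  {σ : Finset V | σ.Nonempty ∧ ∃ h ∈ H, ∀ v ∈ σ, v ∉ h}

/-- The geometric realization of a complex `K` of finite subsets of `V`:
convex combinations of vertices supported on a simplex of `K`, topologized as a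
subspace of `V → ℝ`. -/
def geomReal {V : Type*} (K : Set (Finset V)) : Set (V → ℝ) :=
  {f | (∀ v, 0 ≤ f v) ∧ ∃ σ ∈ K, (∀ v, f v ≠ 0 → v ∈ σ) ∧ ∑ v ∈ σ, f v = 1}

/-- The hypergraph `Cube(n,k)`: vertices are the vertices `{0,1}^n` of the
`n`-cube, and hyperedges are the vertex sets of the `k`-dimensional faces,
i.e. the subsets obtained by fixing `n - k` of the coordinates. -/
def cubeEdges (n k : ℕ) : Set (Set (Fin n → Bool)) :=
  {e | ∃ (s : Finset (Fin n)) (g : Fin n → Bool),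
    s.card = n - k ∧ e = {f | ∀ i ∈ s, f i = g i}}

/-- The Euler characteristic of a complex of (nonempty) finite simplices:
`χ(K) = Σ_{σ ∈ K} (-1)^(|σ|-1)`. -/
noncomputable def eulerChar {V : Type*} (K : Set (Finset V)) : ℤ :=
  ∑ᶠ σ ∈ K, (-1 : ℤ) ^ (σ.card - 1)


namespace ThetaCubeAux

/-- flip coordinate `j` -/
def cflip {n : ℕ} (j : Fin n) (f : Fin n → Bool) : Fin n → Bool :=
  Function.update f j (!f j)

lemma cflip_cflip {n : ℕ} (j : Fin n) (f : Fin n → Bool) : cflip j (cflip j f) = f := by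
  simp [cflip, Function.update_self, Function.update_idem, Bool.not_not,
    Function.update_eq_self]

lemma image_cflip_invol {n : ℕ} (j : Fin n) (σ : Finset (Fin n → Bool)) :
    (σ.image (cflip j)).image (cflip j) = σ := by
  classical
  rw [Finset.image_image]
  have : cflip j ∘ cflip j = id := funext fun f => cflip_cflip j f
  rw [this, Finset.image_id]

lemma cflip_comm {n : ℕ} {i j : Fin n} (hij : i ≠ j) (f : Fin n → Bool) :
    cflip i (cflip j f) = cflip j (cflip i f) := by
  unfold cflip
  rw [Function.update_of_ne hij, Function.update_of_ne hij.symm,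
    Function.update_comm hij.symm]

lemma cflip_apply_eq {n : ℕ} (j : Fin n) (f g : Fin n → Bool) (i : Fin n) :
    cflip j f i = g i ↔ f i = cflip j g i := by
  rcases eq_or_ne i j with rfl | h
  · simp only [cflip, Function.update_self]
    cases f i <;> cases g i <;> simp
  · simp [cflip, Function.update_of_ne h]

/-- transversal predicate -/
def TransP (n k : ℕ) (σ : Finset (Fin n → Bool)) : Prop :=
  ∀ e ∈ cubeEdges n k, ∃ v ∈ σ, v ∈ e

lemma transP_image {n k : ℕ} (j : Fin n) {σ : Finset (Fin n → Bool)}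
    (hσ : TransP n k σ) : TransP n k (σ.image (cflip j)) := by
  classical
  rintro e ⟨s, g, hs, rfl⟩
  obtain ⟨v, hv, hv2⟩ := hσ {f | ∀ i ∈ s, f i = cflip j g i} ⟨s, cflip j g, hs, rfl⟩
  refine ⟨cflip j v, Finset.mem_image_of_mem _ hv, ?_⟩
  intro i hi
  rw [cflip_apply_eq]
  exact hv2 i hi

open Classical in
noncomputable def Fj (n k j : ℕ) : Finset (Finset (Fin n → Bool)) :=
  Finset.univ.filter
    (fun σ => TransP n k σ ∧ ∀ i : Fin n, (i : ℕ) < j → σ.image (cflip i) = σ)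

lemma mem_Fj {n k j : ℕ} {σ : Finset (Fin n → Bool)} :
    σ ∈ Fj n k j ↔ TransP n k σ ∧ ∀ i : Fin n, (i : ℕ) < j → σ.image (cflip i) = σ := by
  classical
  simp [Fj]

lemma Fj_succ_subset {n k j : ℕ} : Fj n k (j + 1) ⊆ Fj n k j := by
  intro σ hσ
  rw [mem_Fj] at *
  exact ⟨hσ.1, fun i hi => hσ.2 i (Nat.lt_succ_of_lt hi)⟩

lemma Fj_step {n k j : ℕ} (hj : j < n) :
    ((Fj n k j).card : ZMod 2) = ((Fj n k (j + 1)).card : ZMod 2) := by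
  classical
  set J : Fin n := ⟨j, hj⟩
  have hcard : (Fj n k j \ Fj n k (j + 1)).card + (Fj n k (j + 1)).card = (Fj n k j).card :=
    Finset.card_sdiff_add_card_eq_card Fj_succ_subset
  have hmem : ∀ σ ∈ Fj n k j \ Fj n k (j + 1),
      σ.image (cflip J) ∈ Fj n k j \ Fj n k (j + 1) ∧ σ.image (cflip J) ≠ σ := by
    intro σ hσ
    rw [Finset.mem_sdiff, mem_Fj, mem_Fj] at hσ
    obtain ⟨⟨ht, hinv⟩, hnot⟩ := hσ
    have hJ : σ.image (cflip J) ≠ σ := by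
      intro h
      exact hnot ⟨ht, fun i hi => by
        rcases Nat.lt_succ_iff_lt_or_eq.mp hi with h' | h'
        · exact hinv i h'
        · have : i = J := Fin.ext h'
          rw [this]; exact h⟩
    have hinv' : ∀ i : Fin n, (i : ℕ) < j →
        (σ.image (cflip J)).image (cflip i) = σ.image (cflip J) := by
      intro i hi
      have hij : i ≠ J := by
        intro h; rw [h] at hi; exact absurd hi (lt_irrefl _)
      rw [Finset.image_image]
      have : cflip i ∘ cflip J = cflip J ∘ cflip i := funext fun f => cflip_comm hij f
      rw [this, ← Finset.image_image, hinv i hi]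
    refine ⟨Finset.mem_sdiff.mpr ⟨mem_Fj.mpr ⟨transP_image J ht, hinv'⟩, ?_⟩, ?_⟩
    · rw [mem_Fj]
      rintro ⟨-, h2⟩
      have := h2 J (Nat.lt_succ_self j)
      rw [image_cflip_invol] at this
      exact hJ this.symm
    · exact hJ
  have hzero : ∑ _σ ∈ Fj n k j \ Fj n k (j + 1), (1 : ZMod 2) = 0 := by
    apply Finset.sum_involution (g := fun σ _ => σ.image (cflip J))
    · intro a _; decide
    · intro a _ _; exact (hmem a ‹_›).2
    · intro a _; exact image_cflip_invol J a
    · intro a ha; exact (hmem a ha).1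
  have hdiff : ((Fj n k j \ Fj n k (j + 1)).card : ZMod 2) = 0 := by
    rw [← hzero]; simp
  calc ((Fj n k j).card : ZMod 2)
      = ((Fj n k j \ Fj n k (j + 1)).card : ZMod 2) + ((Fj n k (j + 1)).card : ZMod 2) := by
        rw [← hcard]; push_cast; ring
    _ = ((Fj n k (j + 1)).card : ZMod 2) := by rw [hdiff, zero_add]

/-- the standard `k`-face hyperedge datum: coordinates `≥ k` are fixed -/
lemma highs_card {n k : ℕ} (hkn : k < n) :
    (Finset.Ici (⟨k, hkn⟩ : Fin n)).card = n - k := by rw [Fin.card_Ici]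

lemma mem_highs {n k : ℕ} (hkn : k < n) (i : Fin n) :
    i ∈ Finset.Ici (⟨k, hkn⟩ : Fin n) ↔ k ≤ (i : ℕ) := by
  rw [Finset.mem_Ici]; exact Iff.rfl

lemma univ_transP (n k : ℕ) : TransP n k Finset.univ := by
  rintro e ⟨s, g, hs, rfl⟩
  exact ⟨g, Finset.mem_univ g, fun i _ => rfl⟩

lemma univ_mem_Fj (n k j : ℕ) : (Finset.univ : Finset (Fin n → Bool)) ∈ Fj n k j := by
  rw [mem_Fj]
  refine ⟨univ_transP n k, fun i _ => ?_⟩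
  apply Finset.eq_univ_of_forall
  intro f
  exact Finset.mem_image.mpr ⟨cflip i f, Finset.mem_univ _, cflip_cflip i f⟩

lemma reach {n k : ℕ} {σ : Finset (Fin n → Bool)}
    (hinv : ∀ i : Fin n, (i : ℕ) < k → σ.image (cflip i) = σ) (v : Fin n → Bool) :
    ∀ m (w : Fin n → Bool), w ∈ σ → (∀ i : Fin n, k ≤ (i : ℕ) → w i = v i) →
      (Finset.univ.filter fun i => w i ≠ v i).card ≤ m → v ∈ σ := by
  classical
  intro m
  induction m with
  | zero =>
    intro w hw hagree hcard
    have : (Finset.univ.filter fun i => w i ≠ v i) = ∅ := Finset.card_eq_zero.mp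
      (Nat.le_zero.mp hcard)
    have hwv : w = v := by
      funext i
      by_contra h
      have hi : i ∈ (Finset.univ.filter fun i => w i ≠ v i) := by simp [h]
      rw [this] at hi
      exact absurd hi (Finset.notMem_empty i)
    rwa [hwv] at hw
  | succ m ih =>
    intro w hw hagree hcard
    rcases Finset.eq_empty_or_nonempty (Finset.univ.filter fun i => w i ≠ v i) with he | ⟨j, hj⟩
    · have hwv : w = v := by
        funext i
        by_contra h
        have hi : i ∈ (Finset.univ.filter fun i => w i ≠ v i) := by simp [h]
        rw [he] at hi
        exact absurd hi (Finset.notMem_empty i)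
      rwa [hwv] at hw
    · have hjne : w j ≠ v j := (Finset.mem_filter.mp hj).2
      have hjk : (j : ℕ) < k := by
        by_contra h
        exact hjne (hagree j (Nat.le_of_not_lt h))
      set w' := cflip j w with hw'
      have hw'mem : w' ∈ σ := by
        rw [← hinv j hjk]
        exact Finset.mem_image_of_mem _ hw
      have hw'j : w' j = v j := by
        rw [hw', cflip, Function.update_self]
        cases hb : w j <;> cases hb' : v j <;> simp_all
      have hw'other : ∀ i : Fin n, i ≠ j → w' i = w i := by
        intro i hij
        rw [hw', cflip, Function.update_of_ne hij]
      have hsub : (Finset.univ.filter fun i => w' i ≠ v i) ⊆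
          (Finset.univ.filter fun i => w i ≠ v i).erase j := by
        intro i hi
        rw [Finset.mem_filter] at hi
        rcases eq_or_ne i j with rfl | hij
        · exact absurd hw'j hi.2
        · rw [Finset.mem_erase]
          refine ⟨hij, Finset.mem_filter.mpr ⟨Finset.mem_univ _, ?_⟩⟩
          rw [← hw'other i hij]; exact hi.2
      have hagree' : ∀ i : Fin n, k ≤ (i : ℕ) → w' i = v i := by
        intro i hi
        have hij : i ≠ j := by
          intro h; rw [h] at hi; omega
        rw [hw'other i hij]; exact hagree i hi
      refine ih w' hw'mem hagree' ?_
      calc (Finset.univ.filter fun i => w' i ≠ v i).card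
          ≤ ((Finset.univ.filter fun i => w i ≠ v i).erase j).card := Finset.card_le_card hsub
        _ = (Finset.univ.filter fun i => w i ≠ v i).card - 1 := Finset.card_erase_of_mem hj
        _ ≤ m := by omega

lemma Fj_top {n k : ℕ} (hkn : k < n) :
    Fj n k k = {(Finset.univ : Finset (Fin n → Bool))} := by
  classical
  apply Finset.eq_singleton_iff_unique_mem.mpr
  refine ⟨univ_mem_Fj n k k, ?_⟩
  intro σ hσ
  rw [mem_Fj] at hσ
  obtain ⟨ht, hinv⟩ := hσ
  apply Finset.eq_univ_of_forall
  intro v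
  obtain ⟨w, hw, hw2⟩ := ht {f | ∀ i ∈ Finset.Ici (⟨k, hkn⟩ : Fin n), f i = v i}
    ⟨Finset.Ici (⟨k, hkn⟩ : Fin n), v, highs_card hkn, rfl⟩
  have hagree : ∀ i : Fin n, k ≤ (i : ℕ) → w i = v i := fun i hi =>
    hw2 i ((mem_highs hkn i).mpr hi)
  exact reach hinv v (Finset.univ.filter fun i => w i ≠ v i).card w hw hagree le_rfl

lemma Fj_card_chain {n k : ℕ} (hkn : k < n) :
    ∀ m, m ≤ k → ((Fj n k (k - m)).card : ZMod 2) = 1 := by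
  intro m
  induction m with
  | zero =>
    intro _
    simp [Fj_top hkn]
  | succ m ih =>
    intro hm
    have h1 : k - (m + 1) < n := by omega
    have h2 : k - (m + 1) + 1 = k - m := by omega
    rw [Fj_step h1, h2]
    exact ih (by omega)

lemma Fj_zero_card {n k : ℕ} (hkn : k < n) : ((Fj n k 0).card : ZMod 2) = 1 := by
  have := Fj_card_chain hkn k le_rfl
  simpa using this

lemma transP_nonempty {n k : ℕ} (hkn : k < n) {σ : Finset (Fin n → Bool)}
    (h : TransP n k σ) : σ.Nonempty := by
  obtain ⟨v, hv, -⟩ := h {f | ∀ i ∈ Finset.Ici (⟨k, hkn⟩ : Fin n), f i = false}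
    ⟨Finset.Ici (⟨k, hkn⟩ : Fin n), fun _ => false, highs_card hkn, rfl⟩
  exact ⟨v, hv⟩

end ThetaCubeAux

open ThetaCubeAux

/-- For every `n ≥ 1` and `0 ≤ k ≤ n-1`, the Euler
characteristic `χ(Θ(Cube(n,k)))` is even. -/
theorem eulerChar_theta_cube_even (n k : ℕ) (hn : 1 ≤ n) (hk : k ≤ n - 1) :
    2 ∣ eulerChar (thetaComplex (cubeEdges n k)) := by
  classical
  have hkn : k < n := by omega
  have hfin : (thetaComplex (cubeEdges n k)).Finite := Set.toFinite _
  have h1 : eulerChar (thetaComplex (cubeEdges n k)) =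
      ∑ σ ∈ hfin.toFinset, (-1 : ℤ) ^ (σ.card - 1) := by
    rw [eulerChar]
    exact finsum_mem_eq_finite_toFinset_sum _ hfin
  -- identify the theta complex finset
  have hΘ : hfin.toFinset =
      (Finset.univ.filter (fun σ : Finset (Fin n → Bool) => σ.Nonempty)).filter
        (fun σ => ¬ TransP n k σ) := by
    ext σ
    have hnt : (¬ TransP n k σ) ↔ ∃ h ∈ cubeEdges n k, ∀ v ∈ σ, v ∉ h := by
      unfold TransP
      push_neg
      rfl
    simp only [Set.Finite.mem_toFinset, Finset.mem_filter, Finset.mem_univ, true_and, hnt]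
    simp [thetaComplex]
  -- parity of the number of nonempty finsets
  set A := Finset.univ.filter (fun σ : Finset (Fin n → Bool) => σ.Nonempty) with hAdef
  have hAcard : A.card + 1 = 2 ^ 2 ^ n := by
    have hA : A = Finset.univ.erase (∅ : Finset (Fin n → Bool)) := by
      ext σ
      simp [hAdef, Finset.nonempty_iff_ne_empty]
    rw [hA, Finset.card_erase_of_mem (Finset.mem_univ _), Finset.card_univ,
      Fintype.card_finset]
    have : Fintype.card (Fin n → Bool) = 2 ^ n := by simp
    rw [this]
    have : 0 < 2 ^ 2 ^ n := Nat.pow_pos (by norm_num)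
    omega
  have hA2 : (A.card : ZMod 2) = 1 := by
    have := congrArg (fun m : ℕ => (m : ZMod 2)) hAcard
    push_cast at this
    have h2 : ((2 : ZMod 2)) ^ 2 ^ n = 0 := by
      rw [show ((2 : ZMod 2)) = 0 by decide, zero_pow (by positivity : (0:ℕ) < 2 ^ n).ne']
    rw [h2] at this
    have h3 : (A.card : ZMod 2) = -1 := by linear_combination this
    rw [h3]; decide
  -- partition of A
  have hpart : (A.filter (fun σ => TransP n k σ)).card
      + (A.filter (fun σ => ¬ TransP n k σ)).card = A.card :=
    Finset.card_filter_add_card_filter_not _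
  have hF0 : A.filter (fun σ => TransP n k σ) = Fj n k 0 := by
    ext σ
    simp only [Finset.mem_filter, hAdef, Finset.mem_univ, true_and, mem_Fj]
    constructor
    · rintro ⟨-, h⟩
      exact ⟨h, fun i hi => absurd hi (by omega)⟩
    · rintro ⟨h, -⟩
      exact ⟨transP_nonempty hkn h, h⟩
  have hcard0 : ((A.filter (fun σ => ¬ TransP n k σ)).card : ZMod 2) = 0 := by
    have := congrArg (fun m : ℕ => (m : ZMod 2)) hpart
    push_cast at this
    rw [hF0, Fj_zero_card hkn, hA2] at this
    linear_combination this
  -- conclude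
  rw [h1]
  have hcast : ((∑ σ ∈ hfin.toFinset, (-1 : ℤ) ^ (σ.card - 1) : ℤ) : ZMod 2) = 0 := by
    push_cast
    have hm1 : (-1 : ZMod 2) = 1 := by decide
    rw [hΘ]
    simp only [hm1, one_pow, Finset.sum_const, nsmul_eq_mul, mul_one]
    exact hcard0
  have := (ZMod.intCast_zmod_eq_zero_iff_dvd _ 2).mp hcast
  exact_mod_cast this
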